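/- arXiv:1702.01083 — 11 statements merged into one kernel-verified Lean document; each statement's English description precedes it below -/
import Mathlib

section
/- Let M be a minimum-cost MM between S and T. Let b, c ∈ S and a, d ∈ T be points with a ≤ b < c ≤ d. If the pair (c, a) (matching the S-point c to the T-point a) belongs to M, then the pair (b, d) does not belong to M. -/
open Finset

/-- A many-to-many matching (MM) between point sets `S` and `T` on the real line:
a set of pairs `(s, t)` with `s ∈ S`, `t ∈ T`, covering every point of `S` and of `T`. -/
def IsMM (S T : Finset ℝ) (M : Finset (ℝ × ℝ)) : Prop :=
  (∀ p ∈ M, p.1 ∈ S ∧ p.2 ∈ T) ∧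
  (∀ s ∈ S, ∃ t, (s, t) ∈ M) ∧
  (∀ t ∈ T, ∃ s, (s, t) ∈ M)

/-- The cost of a matching: the sum of the distances of its pairs. -/
noncomputable def mmCost (M : Finset (ℝ × ℝ)) : ℝ := ∑ p ∈ M, |p.1 - p.2|

/-- A minimum-cost MM. -/
def IsMinMM (S T : Finset ℝ) (M : Finset (ℝ × ℝ)) : Prop :=
  IsMM S T M ∧ ∀ M' : Finset (ℝ × ℝ), IsMM S T M' → mmCost M ≤ mmCost M'

/-- In a minimum-cost MM `M`, for `b, c ∈ S` and `a, d ∈ T` with `a ≤ b < c ≤ d`,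
if `(c, a) ∈ M` then `(b, d) ∉ M`. -/
theorem stmt_0 (S T : Finset ℝ) (hdisj : Disjoint S T) (hS : S.Nonempty) (hT : T.Nonempty)
    (M : Finset (ℝ × ℝ)) (hM : IsMinMM S T M)
    (b c a d : ℝ) (hb : b ∈ S) (hc : c ∈ S) (ha : a ∈ T) (hd : d ∈ T)
    (hab : a ≤ b) (hbc : b < c) (hcd : c ≤ d)
    (hca : (c, a) ∈ M) : (b, d) ∉ M := by
  intro hbd
  have hbc' : b ≠ c := ne_of_lt hbc
  have had : a < d := lt_of_le_of_lt hab (lt_of_lt_of_le hbc hcd)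
  set M0 := (M.erase (c, a)).erase (b, d) with hM0
  set M' := insert (b, a) (insert (c, d) M0) with hM'
  have hbdM0 : (b, d) ∈ M.erase (c, a) := by
    apply Finset.mem_erase.mpr
    exact ⟨by simp [Prod.ext_iff, hbc'], hbd⟩
  -- cost of M0
  have hcost0 : mmCost M0 = mmCost M - |c - a| - |b - d| := by
    unfold mmCost
    have h1 : ∑ p ∈ M.erase (c, a), |p.1 - p.2| = ∑ p ∈ M, |p.1 - p.2| - |c - a| := by
      have := Finset.sum_erase_add M (fun p => |p.1 - p.2|) hca
      simp at this ⊢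
      linarith
    have h2 : ∑ p ∈ M0, |p.1 - p.2|
        = ∑ p ∈ M.erase (c, a), |p.1 - p.2| - |b - d| := by
      have := Finset.sum_erase_add (M.erase (c, a)) (fun p => |p.1 - p.2|) hbdM0
      simp at this ⊢
      linarith
    rw [h2, h1]
  -- cost of insert ≤ term + cost
  have hins : ∀ (p : ℝ × ℝ) (X : Finset (ℝ × ℝ)),
      mmCost (insert p X) ≤ |p.1 - p.2| + mmCost X := by
    intro p X
    by_cases hp : p ∈ X
    · rw [Finset.insert_eq_self.mpr hp]
      have : (0:ℝ) ≤ |p.1 - p.2| := abs_nonneg _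
      linarith
    · unfold mmCost
      rw [Finset.sum_insert hp]
  have hcost' : mmCost M' ≤ |b - a| + |c - d| + mmCost M0 := by
    calc mmCost M' ≤ |b - a| + mmCost (insert (c, d) M0) := hins (b, a) _
      _ ≤ |b - a| + (|c - d| + mmCost M0) := by
          have := hins (c, d) M0
          linarith
      _ = |b - a| + |c - d| + mmCost M0 := by ring
  -- M' is an MM
  obtain ⟨⟨hpairs, hcovS, hcovT⟩, hmin⟩ := hM
  have hMM' : IsMM S T M' := by
    refine ⟨?_, ?_, ?_⟩
    · intro p hp
      rcases Finset.mem_insert.mp hp with h | h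
      · subst h; exact ⟨hb, ha⟩
      rcases Finset.mem_insert.mp h with h | h
      · subst h; exact ⟨hc, hd⟩
      · exact hpairs p (Finset.mem_of_mem_erase (Finset.mem_of_mem_erase h))
    · intro s hs
      obtain ⟨t, ht⟩ := hcovS s hs
      by_cases h1 : (s, t) = (c, a)
      · obtain ⟨rfl, rfl⟩ := Prod.mk.injEq .. ▸ Prod.ext_iff.mp h1
        exact ⟨d, by simp [hM']⟩
      by_cases h2 : (s, t) = (b, d)
      · obtain ⟨rfl, rfl⟩ := Prod.mk.injEq .. ▸ Prod.ext_iff.mp h2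
        exact ⟨a, by simp [hM']⟩
      · exact ⟨t, by simp [hM', hM0, Finset.mem_erase, h1, h2, ht]⟩
    · intro t ht'
      obtain ⟨s, hs⟩ := hcovT t ht'
      by_cases h1 : (s, t) = (c, a)
      · obtain ⟨rfl, rfl⟩ := Prod.mk.injEq .. ▸ Prod.ext_iff.mp h1
        exact ⟨b, by simp [hM']⟩
      by_cases h2 : (s, t) = (b, d)
      · obtain ⟨rfl, rfl⟩ := Prod.mk.injEq .. ▸ Prod.ext_iff.mp h2
        exact ⟨c, by simp [hM']⟩
      · exact ⟨s, by simp [hM', hM0, Finset.mem_erase, h1, h2, hs]⟩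
  have hle := hmin M' hMM'
  have e1 : |c - a| = c - a := abs_of_nonneg (by linarith)
  have e2 : |b - d| = d - b := by rw [abs_of_nonpos (by linarith)]; ring
  have e3 : |b - a| = b - a := abs_of_nonneg (by linarith)
  have e4 : |c - d| = d - c := by rw [abs_of_nonpos (by linarith)]; ring
  rw [e1, e2] at hcost0
  rw [e3, e4, hcost0] at hcost'
  linarith
end

section
/- Let M be an MM between S and T, let b, c ∈ S and a, d ∈ T satisfy a ≤ b < c ≤ d, and suppose the pairs (c, a) and (b, d) both belong to M while the pairs (b, a) and (c, d) do not belong to M. Then M' := (M \ {(c, a), (b, d)}) ∪ {(b, a), (c, d)} is an MM between S and T whose cost is strictly smaller than the cost of M. -/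
open Finset

/-- Swapping the crossing pairs `(c, a)` and `(b, d)` for `(b, a)` and `(c, d)`
(when the latter are absent) yields an MM of strictly smaller cost. -/
theorem stmt_1 (S T : Finset ℝ) (hdisj : Disjoint S T) (hS : S.Nonempty) (hT : T.Nonempty)
    (M : Finset (ℝ × ℝ)) (hM : IsMM S T M)
    (b c a d : ℝ) (hb : b ∈ S) (hc : c ∈ S) (ha : a ∈ T) (hd : d ∈ T)
    (hab : a ≤ b) (hbc : b < c) (hcd : c ≤ d)
    (hca : (c, a) ∈ M) (hbd : (b, d) ∈ M)
    (hba : (b, a) ∉ M) (hcd' : (c, d) ∉ M) :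
    IsMM S T ((M \ {(c, a), (b, d)}) ∪ {(b, a), (c, d)}) ∧
      mmCost ((M \ {(c, a), (b, d)}) ∪ {(b, a), (c, d)}) < mmCost M := by
  obtain ⟨hpairs, hScov, hTcov⟩ := hM
  have hne1 : ((c, a) : ℝ × ℝ) ≠ (b, d) := by
    intro h; exact absurd (congrArg Prod.fst h) (ne_of_gt hbc)
  have hne2 : ((b, a) : ℝ × ℝ) ≠ (c, d) := by
    intro h; exact absurd (congrArg Prod.fst h) (ne_of_lt hbc)
  have hsub : ({(c, a), (b, d)} : Finset (ℝ × ℝ)) ⊆ M := by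
    intro p hp
    rcases Finset.mem_insert.mp hp with h | h
    · exact h ▸ hca
    · exact (Finset.mem_singleton.mp h) ▸ hbd
  have hdis : Disjoint (M \ {(c, a), (b, d)}) ({(b, a), (c, d)} : Finset (ℝ × ℝ)) := by
    rw [Finset.disjoint_right]
    intro p hp hpm
    rcases Finset.mem_insert.mp hp with h | h
    · exact hba (h ▸ (Finset.mem_sdiff.mp hpm).1)
    · exact hcd' ((Finset.mem_singleton.mp h) ▸ (Finset.mem_sdiff.mp hpm).1)
  constructor
  · refine ⟨?_, ?_, ?_⟩
    · intro p hp
      rcases Finset.mem_union.mp hp with h | h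
      · exact hpairs p (Finset.mem_sdiff.mp h).1
      · rcases Finset.mem_insert.mp h with h | h
        · subst h; exact ⟨hb, ha⟩
        · rw [Finset.mem_singleton.mp h]; exact ⟨hc, hd⟩
    · intro s hs
      obtain ⟨t, ht⟩ := hScov s hs
      by_cases h1 : (s, t) = (c, a)
      · exact ⟨d, Finset.mem_union.mpr (Or.inr (by
          have : s = c := congrArg Prod.fst h1
          subst this; simp))⟩
      by_cases h2 : (s, t) = (b, d)
      · exact ⟨a, Finset.mem_union.mpr (Or.inr (by
          have : s = b := congrArg Prod.fst h2
          subst this; simp))⟩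
      · exact ⟨t, Finset.mem_union.mpr (Or.inl (Finset.mem_sdiff.mpr ⟨ht, by
          simp only [Finset.mem_insert, Finset.mem_singleton]
          tauto⟩))⟩
    · intro t ht
      obtain ⟨s, hs⟩ := hTcov t ht
      by_cases h1 : (s, t) = (c, a)
      · exact ⟨b, Finset.mem_union.mpr (Or.inr (by
          have : t = a := congrArg Prod.snd h1
          subst this; simp))⟩
      by_cases h2 : (s, t) = (b, d)
      · exact ⟨c, Finset.mem_union.mpr (Or.inr (by
          have : t = d := congrArg Prod.snd h2
          subst this; simp))⟩
      · exact ⟨s, Finset.mem_union.mpr (Or.inl (Finset.mem_sdiff.mpr ⟨hs, by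
          simp only [Finset.mem_insert, Finset.mem_singleton]
          tauto⟩))⟩
  · unfold mmCost
    rw [Finset.sum_union hdis, Finset.sum_sdiff_eq_sub hsub,
      Finset.sum_pair hne1, Finset.sum_pair hne2]
    have e1 : |c - a| = c - a := abs_of_nonneg (by linarith)
    have e2 : |b - d| = -(b - d) := abs_of_nonpos (by linarith)
    have e3 : |b - a| = b - a := abs_of_nonneg (by linarith)
    have e4 : |c - d| = -(c - d) := abs_of_nonpos (by linarith)
    rw [e1, e2, e3, e4]
    linarith
end

section
/- Let M be a minimum-cost MM between S and T. Then M contains no pair (a, d) with a ∈ S and d ∈ T for which there exist b ∈ T and c ∈ S with a < b < c < d. -/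
open Finset

lemma cost_insert_le (x : ℝ × ℝ) (s : Finset (ℝ × ℝ)) :
    mmCost (insert x s) ≤ |x.1 - x.2| + mmCost s := by
  by_cases hx : x ∈ s
  · rw [mmCost, Finset.insert_eq_self.2 hx]
    have : (0:ℝ) ≤ |x.1 - x.2| := abs_nonneg _
    unfold mmCost
    linarith
  · rw [mmCost, Finset.sum_insert hx]
    exact le_of_eq rfl

/-- A minimum-cost MM contains no pair `(a, d)` with `a ∈ S`, `d ∈ T` for which
there exist `b ∈ T` and `c ∈ S` with `a < b < c < d`. -/
theorem stmt_2 (S T : Finset ℝ) (hdisj : Disjoint S T) (hS : S.Nonempty) (hT : T.Nonempty)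
    (M : Finset (ℝ × ℝ)) (hM : IsMinMM S T M)
    (a d : ℝ) (ha : a ∈ S) (hd : d ∈ T)
    (h : ∃ b ∈ T, ∃ c ∈ S, a < b ∧ b < c ∧ c < d) :
    (a, d) ∉ M := by
  obtain ⟨b, hb, c, hc, hab, hbc, hcd⟩ := h
  intro had
  obtain ⟨⟨hMem, hScov, hTcov⟩, hmin⟩ := hM
  set M' : Finset (ℝ × ℝ) := insert (a, b) (insert (c, d) (M.erase (a, d))) with hM'def
  have hMM' : IsMM S T M' := by
    refine ⟨?_, ?_, ?_⟩
    · intro p hp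
      simp only [hM'def, Finset.mem_insert, Finset.mem_erase] at hp
      rcases hp with rfl | rfl | ⟨_, hp⟩
      · exact ⟨ha, hb⟩
      · exact ⟨hc, hd⟩
      · exact hMem p hp
    · intro s hs
      obtain ⟨t, ht⟩ := hScov s hs
      by_cases hst : (s, t) = (a, d)
      · obtain ⟨rfl, rfl⟩ := Prod.mk.injEq .. ▸ hst
        exact ⟨b, by simp [hM'def]⟩
      · exact ⟨t, by simp [hM'def, Finset.mem_erase, hst, ht]⟩
    · intro t ht'
      obtain ⟨s, hs⟩ := hTcov t ht'
      by_cases hst : (s, t) = (a, d)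
      · obtain ⟨rfl, rfl⟩ := Prod.mk.injEq .. ▸ hst
        exact ⟨c, by simp [hM'def]⟩
      · exact ⟨s, by simp [hM'def, Finset.mem_erase, hst, hs]⟩
  have hle := hmin M' hMM'
  have h1 : mmCost M' ≤ |a - b| + (|c - d| + mmCost (M.erase (a, d))) := by
    calc mmCost M' ≤ |a - b| + mmCost (insert (c, d) (M.erase (a, d))) :=
          cost_insert_le (a, b) _
      _ ≤ |a - b| + (|c - d| + mmCost (M.erase (a, d))) := by
          have := cost_insert_le (c, d) (M.erase (a, d))
          linarith
  have h2 : mmCost M = |a - d| + mmCost (M.erase (a, d)) := by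
    rw [mmCost, mmCost, ← Finset.add_sum_erase M _ had]
  have habs1 : |a - b| = b - a := by rw [abs_sub_comm]; exact abs_of_pos (by linarith)
  have habs2 : |c - d| = d - c := by rw [abs_sub_comm]; exact abs_of_pos (by linarith)
  have habs3 : |a - d| = d - a := by rw [abs_sub_comm]; exact abs_of_pos (by linarith)
  rw [h2, habs3] at hle
  rw [habs1, habs2] at h1
  linarith
end

section
/- Let M be an MM between S and T containing a pair (a, d) with a ∈ S and d ∈ T, and suppose there exist b ∈ T and c ∈ S with a < b < c < d such that the pairs (a, b) and (c, d) do not belong to M. Then M' := (M \ {(a, d)}) ∪ {(a, b), (c, d)} is an MM between S and T whose cost is strictly smaller than the cost of M. -/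
open Finset

/-- Replacing a long pair `(a, d)` by the two pairs `(a, b)` and `(c, d)`
(with `a < b < c < d`, the latter two absent from `M`) yields an MM of strictly
smaller cost. -/
theorem stmt_3 (S T : Finset ℝ) (hdisj : Disjoint S T) (hS : S.Nonempty) (hT : T.Nonempty)
    (M : Finset (ℝ × ℝ)) (hM : IsMM S T M)
    (a d : ℝ) (ha : a ∈ S) (hd : d ∈ T) (had : (a, d) ∈ M)
    (b c : ℝ) (hb : b ∈ T) (hc : c ∈ S)
    (h1 : a < b) (h2 : b < c) (h3 : c < d)
    (hab : (a, b) ∉ M) (hcd : (c, d) ∉ M) :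
    IsMM S T ((M \ {(a, d)}) ∪ {(a, b), (c, d)}) ∧
      mmCost ((M \ {(a, d)}) ∪ {(a, b), (c, d)}) < mmCost M := by
  obtain ⟨hpairs, hcovS, hcovT⟩ := hM
  constructor
  · refine ⟨?_, ?_, ?_⟩
    · intro p hp
      rcases Finset.mem_union.1 hp with h | h
      · exact hpairs p (Finset.mem_sdiff.1 h).1
      · rcases Finset.mem_insert.1 h with h | h
        · subst h; exact ⟨ha, hb⟩
        · simp only [Finset.mem_singleton] at h; subst h; exact ⟨hc, hd⟩
    · intro s hs
      obtain ⟨t, ht⟩ := hcovS s hs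
      by_cases h : (s, t) = (a, d)
      · refine ⟨b, ?_⟩
        apply Finset.mem_union_right
        simp [Prod.ext_iff] at h
        simp [h.1]
      · exact ⟨t, Finset.mem_union_left _ (Finset.mem_sdiff.2 ⟨ht, by simpa using h⟩)⟩
    · intro t ht
      obtain ⟨s, hst⟩ := hcovT t ht
      by_cases h : (s, t) = (a, d)
      · refine ⟨c, ?_⟩
        apply Finset.mem_union_right
        simp [Prod.ext_iff] at h
        simp [h.2]
      · exact ⟨s, Finset.mem_union_left _ (Finset.mem_sdiff.2 ⟨hst, by simpa using h⟩)⟩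
  · have hdisj2 : Disjoint (M \ {(a, d)}) ({(a, b), (c, d)} : Finset (ℝ × ℝ)) := by
      rw [Finset.disjoint_right]
      intro p hp
      rcases Finset.mem_insert.1 hp with h | h
      · subst h; intro hm; exact hab (Finset.mem_sdiff.1 hm).1
      · simp only [Finset.mem_singleton] at h; subst h
        intro hm; exact hcd (Finset.mem_sdiff.1 hm).1
    have hsub : ({(a, d)} : Finset (ℝ × ℝ)) ⊆ M := Finset.singleton_subset_iff.2 had
    have hne : ((a, b) : ℝ × ℝ) ≠ (c, d) := by
      intro h; exact absurd (congrArg Prod.fst h) (ne_of_lt (h1.trans h2))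
    unfold mmCost
    rw [Finset.sum_union hdisj2, Finset.sum_sdiff_eq_sub hsub,
      Finset.sum_pair hne, Finset.sum_singleton]
    have e1 : |a - d| = d - a := by rw [abs_of_nonpos (by linarith)]; ring
    have e2 : |a - b| = b - a := by rw [abs_of_nonpos (by linarith)]; ring
    have e3 : |c - d| = d - c := by rw [abs_of_nonpos (by linarith)]; ring
    rw [e1, e2, e3]
    linarith
end

section
/- Let M be a minimum-cost MM between S and T, and let l < r be real numbers such that no point of T lies in the open interval (l, r). Then there exists a real number q such that for every pair (a, b) ∈ M with a ∈ S and l < a < r: if a < q then b ≤ l, and if q < a then b ≥ r. (That is, the S-points of the block (l, r) that are matched to the left are exactly those below a separating point q, and those matched to the right are exactly those above q.) -/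
open Finset

lemma no_cross (S T : Finset ℝ) (M : Finset (ℝ × ℝ)) (hM : IsMinMM S T M)
    (l r a b a' b' : ℝ) (hab : (a, b) ∈ M) (hab' : (a', b') ∈ M)
    (ha : l < a) (har' : a' < r)
    (haa : a < a') (hb : r ≤ b) (hb' : b' ≤ l) : False := by
  obtain ⟨⟨hmem, hScov, hTcov⟩, hmin⟩ := hM
  have hne : (a', b') ≠ (a, b) := by
    intro h
    have : a' = a := congrArg Prod.fst h
    linarith
  set M' := insert (a, b') (insert (a', b) ((M.erase (a, b)).erase (a', b'))) with hM'
  have hab'e : (a', b') ∈ M.erase (a, b) := Finset.mem_erase.2 ⟨hne, hab'⟩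
  have hMM' : IsMM S T M' := by
    refine ⟨?_, ?_, ?_⟩
    · intro p hp
      simp only [hM', Finset.mem_insert, Finset.mem_erase] at hp
      rcases hp with h | h | ⟨_, _, h⟩
      · subst h; exact ⟨(hmem _ hab).1, (hmem _ hab').2⟩
      · subst h; exact ⟨(hmem _ hab').1, (hmem _ hab).2⟩
      · exact hmem _ h
    · intro s hs
      obtain ⟨t, ht⟩ := hScov s hs
      by_cases h1 : (s, t) = (a, b)
      · exact ⟨b', by simp [hM', Prod.ext_iff] at h1 ⊢; tauto⟩
      by_cases h2 : (s, t) = (a', b')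
      · exact ⟨b, by simp [hM', Prod.ext_iff] at h2 ⊢; tauto⟩
      · exact ⟨t, by simp [hM', Finset.mem_erase, h1, h2, ht]⟩
    · intro t ht
      obtain ⟨s, hst⟩ := hTcov t ht
      by_cases h1 : (s, t) = (a, b)
      · exact ⟨a', by simp [hM', Prod.ext_iff] at h1 ⊢; tauto⟩
      by_cases h2 : (s, t) = (a', b')
      · exact ⟨a, by simp [hM', Prod.ext_iff] at h2 ⊢; tauto⟩
      · exact ⟨s, by simp [hM', Finset.mem_erase, h1, h2, hst]⟩
  have hcost : mmCost M' < mmCost M := by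
    have h1 : mmCost M' ≤ |a - b'| + mmCost (insert (a', b) ((M.erase (a, b)).erase (a', b'))) :=
      cost_insert_le _ _
    have h2 : mmCost (insert (a', b) ((M.erase (a, b)).erase (a', b'))) ≤
        |a' - b| + mmCost ((M.erase (a, b)).erase (a', b')) := cost_insert_le _ _
    have h3 : mmCost ((M.erase (a, b)).erase (a', b')) =
        mmCost (M.erase (a, b)) - |a' - b'| := by
      rw [mmCost, Finset.sum_erase_eq_sub hab'e]; rfl
    have h4 : mmCost (M.erase (a, b)) = mmCost M - |a - b| := by
      rw [mmCost, Finset.sum_erase_eq_sub hab]; rfl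
    have e1 : |a - b'| = a - b' := abs_of_nonneg (by linarith)
    have e2 : |a' - b| = b - a' := by rw [abs_sub_comm]; exact abs_of_nonneg (by linarith)
    have e3 : |a' - b'| = a' - b' := abs_of_nonneg (by linarith)
    have e4 : |a - b| = b - a := by rw [abs_sub_comm]; exact abs_of_nonneg (by linarith)
    rw [e3] at h3; rw [e4] at h4
    linarith
  exact absurd (hmin M' hMM') (not_le.2 hcost)

/-- Separating point: if no point of `T` lies in the open interval `(l, r)`, then
in a minimum-cost MM there is a point `q` such that every `S`-point of `(l, r)`
below `q` is matched to the left (`≤ l`) and every one above `q` is matched to the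
right (`≥ r`). -/
theorem stmt_5 (S T : Finset ℝ) (hdisj : Disjoint S T) (hS : S.Nonempty) (hT : T.Nonempty)
    (M : Finset (ℝ × ℝ)) (hM : IsMinMM S T M)
    (l r : ℝ) (hlr : l < r) (hTgap : ∀ t ∈ T, ¬ (l < t ∧ t < r)) :
    ∃ q : ℝ, ∀ a b : ℝ, (a, b) ∈ M → a ∈ S → l < a → a < r →
      (a < q → b ≤ l) ∧ (q < a → r ≤ b) := by
  classical
  -- pairs with S-point in (l,r) matched to the right
  set F : Finset (ℝ × ℝ) := M.filter (fun p => l < p.1 ∧ p.1 < r ∧ r ≤ p.2) with hF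
  have hside : ∀ a b : ℝ, (a, b) ∈ M → b ≤ l ∨ r ≤ b := by
    intro a b hab
    have hbT : b ∈ T := (hM.1.1 _ hab).2
    have := hTgap b hbT
    by_contra h
    push_neg at h
    exact this h
  by_cases hFe : F.Nonempty
  · obtain ⟨p₀, hp₀F, hp₀min⟩ := F.exists_min_image Prod.fst hFe
    obtain ⟨hp₀M, hl₀, hr₀, hb₀⟩ := Finset.mem_filter.1 hp₀F
    refine ⟨p₀.1, ?_⟩
    intro a b habM haS hla har
    constructor
    · intro haq
      rcases hside a b habM with h | h
      · exact h
      · have : (a, b) ∈ F := Finset.mem_filter.2 ⟨habM, hla, har, h⟩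
        exact absurd (hp₀min _ this) (not_le.2 haq)
    · intro hqa
      rcases hside a b habM with h | h
      · exact absurd (no_cross S T M hM l r p₀.1 p₀.2 a b
          (by simpa using hp₀M) habM hl₀ har hqa hb₀ h) id
      · exact h
  · refine ⟨r, ?_⟩
    intro a b habM haS hla har
    constructor
    · intro _
      rcases hside a b habM with h | h
      · exact h
      · exact absurd ⟨(a, b), Finset.mem_filter.2 ⟨habM, hla, har, h⟩⟩ hFe
    · intro h; linarith
end

section
/- Let S = {a_1 < a_2 < … < a_s} and T = {b_1 < b_2 < … < b_t} be finite sets of reals with a_s < b_1 and 1 ≤ t ≤ s. Then the minimum of the cost over all MMs between S and T equals ∑_{j=1}^{s} (b_1 − a_j) + ∑_{j=1}^{t} (b_j − b_1). -/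
open Finset

private lemma sum_image_le' {α β : Type*} [DecidableEq α] [DecidableEq β] (s : Finset α) (g : α → β)
    (f : β → ℝ) (hf : ∀ x ∈ s, 0 ≤ f (g x)) :
    ∑ y ∈ s.image g, f y ≤ ∑ x ∈ s, f (g x) := by
  induction s using Finset.induction with
  | empty => simp
  | @insert a s hx ih =>
    rw [sum_insert hx, image_insert]
    have h0 : 0 ≤ f (g a) := hf a (mem_insert_self _ _)
    have ih' := ih (fun x hxs => hf x (mem_insert_of_mem hxs))
    by_cases h : g a ∈ s.image g
    · rw [insert_eq_self.2 h]
      linarith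
    · rw [sum_insert h]
      linarith

/-- Case 0 with `i ≤ s`: for sorted sets `S = {a_1 < … < a_s}` and
`T = {b_1 < … < b_t}` entirely to the right of `S`, with `1 ≤ t ≤ s`, the minimum
MM cost is `∑_{j=1}^s (b_1 - a_j) + ∑_{j=1}^t (b_j - b_1)`. -/
theorem stmt_6 (s t : ℕ) (hs : 0 < s) (ht : 0 < t) (hts : t ≤ s)
    (a : Fin s → ℝ) (b : Fin t → ℝ) (ha : StrictMono a) (hb : StrictMono b)
    (hab : a ⟨s - 1, Nat.sub_lt hs one_pos⟩ < b ⟨0, ht⟩) :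
    IsLeast {c : ℝ | ∃ M : Finset (ℝ × ℝ),
        IsMM (Finset.univ.image a) (Finset.univ.image b) M ∧ mmCost M = c}
      (∑ j : Fin s, (b ⟨0, ht⟩ - a j) + ∑ j : Fin t, (b j - b ⟨0, ht⟩)) := by
  set b0 : ℝ := b ⟨0, ht⟩ with hb0
  have haj : ∀ j : Fin s, a j < b0 := by
    intro j
    calc a j ≤ a ⟨s - 1, Nat.sub_lt hs one_pos⟩ := by
            apply ha.monotone
            simp only [Fin.le_def]
            omega
      _ < b0 := hab
  have hbi : ∀ i : Fin t, b0 ≤ b i := by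
    intro i
    apply hb.monotone
    simp [Fin.le_def]
  -- the target value in a convenient form
  have htarget : ∑ j : Fin s, (b0 - a j) + ∑ j : Fin t, (b j - b0)
      = ((s : ℝ) - t) * b0 + ∑ i : Fin t, b i - ∑ j : Fin s, a j := by
    rw [Finset.sum_sub_distrib, Finset.sum_sub_distrib, Finset.sum_const,
      Finset.sum_const, Finset.card_univ, Finset.card_univ, Fintype.card_fin,
      Fintype.card_fin, nsmul_eq_mul, nsmul_eq_mul]
    ring
  constructor
  · -- membership: exhibit an optimal matching
    -- g j : where a_j gets matched
    set g : ℕ → ℝ := fun j =>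
      if h : j < s - t then b0
      else if h2 : j - (s - t) < t then b ⟨j - (s - t), h2⟩ else 0 with hg
    have hg_ge : ∀ j : Fin s, b0 ≤ g j := by
      intro j
      by_cases h : (j : ℕ) < s - t
      · simp [hg, h]
      · have h2 : (j : ℕ) - (s - t) < t := by omega
        simp only [hg, h, h2, dif_neg, dif_pos, not_false_iff]
        exact hbi _
    have hg_mem : ∀ j : Fin s, g j ∈ Finset.univ.image b := by
      intro j
      by_cases h : (j : ℕ) < s - t
      · simp only [hg, h, dif_pos]
        exact mem_image_of_mem b (mem_univ _)
      · have h2 : (j : ℕ) - (s - t) < t := by omega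
        simp only [hg, h, h2, dif_neg, dif_pos, not_false_iff]
        exact mem_image_of_mem b (mem_univ _)
    set f : Fin s → ℝ × ℝ := fun j => (a j, g j) with hfdef
    have hfinj : Function.Injective f := by
      intro j k h
      exact ha.injective (congrArg Prod.fst h)
    refine ⟨Finset.univ.image f, ⟨?_, ?_, ?_⟩, ?_⟩
    · intro p hp
      simp only [mem_image, mem_univ, true_and] at hp
      obtain ⟨j, rfl⟩ := hp
      exact ⟨mem_image_of_mem a (mem_univ _), hg_mem j⟩
    · intro x hx
      simp only [mem_image, mem_univ, true_and] at hx
      obtain ⟨j, rfl⟩ := hx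
      exact ⟨g j, mem_image_of_mem f (mem_univ j)⟩
    · intro y hy
      simp only [mem_image, mem_univ, true_and] at hy
      obtain ⟨i, rfl⟩ := hy
      refine ⟨a ⟨s - t + i, by omega⟩, ?_⟩
      have : f ⟨s - t + i, by omega⟩ = (a ⟨s - t + i, by omega⟩, b i) := by
        simp only [hfdef, Prod.mk.injEq, true_and, hg]
        have h : ¬ (s - t + (i : ℕ) < s - t) := by omega
        have h2 : s - t + (i : ℕ) - (s - t) < t := by omega
        simp only [h, dif_neg, h2, dif_pos, not_false_iff]
        congr 1
        apply Fin.ext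
        simp
      rw [← this]
      exact mem_image_of_mem f (mem_univ _)
    · -- cost of this matching
      rw [mmCost, Finset.sum_image (fun x _ y _ h => hfinj h)]
      have : ∀ j : Fin s, |(f j).1 - (f j).2| = g j - a j := by
        intro j
        rw [hfdef]
        have := haj j
        have := hg_ge j
        rw [abs_of_nonpos (by dsimp; linarith)]
        ring
      rw [Finset.sum_congr rfl (fun j _ => this j), Finset.sum_sub_distrib, htarget]
      have hsum_g : ∑ j : Fin s, g (j : ℕ) = ((s : ℝ) - t) * b0 + ∑ i : Fin t, b i := by
        rw [Fin.sum_univ_eq_sum_range]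
        have hst : s = (s - t) + t := by omega
        rw [hst, Finset.sum_range_add]
        have h1 : ∑ i ∈ Finset.range (s - t), g i = ((s : ℝ) - t) * b0 := by
          have e1 : ∑ i ∈ Finset.range (s - t), g i
              = ∑ _i ∈ Finset.range (s - t), b0 :=
            Finset.sum_congr rfl (fun i hi => by
              rw [Finset.mem_range] at hi
              simp [hg, hi])
          rw [e1, Finset.sum_const, Finset.card_range, nsmul_eq_mul, Nat.cast_sub hts]
        have h2 : ∑ i ∈ Finset.range t, g (s - t + i) = ∑ i : Fin t, b i := by
          rw [← Fin.sum_univ_eq_sum_range (fun i => g (s - t + i)) t]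
          apply Finset.sum_congr rfl
          intro i _
          have h : ¬ (s - t + (i : ℕ) < s - t) := by omega
          have h2 : s - t + (i : ℕ) - (s - t) < t := by omega
          simp only [hg, h, dif_neg, h2, dif_pos, not_false_iff]
          congr 1
          apply Fin.ext
          simp
        rw [h1, h2, ← hst]
      rw [hsum_g]
  · -- lower bound
    rintro c ⟨M, ⟨hMst, hMS, hMT⟩, rfl⟩
    have himg1 : M.image Prod.fst = Finset.univ.image a := by
      ext x
      simp only [mem_image, mem_univ, true_and]
      constructor
      · rintro ⟨p, hp, rfl⟩
        have := (hMst p hp).1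
        simpa using this
      · rintro ⟨j, rfl⟩
        obtain ⟨y, hy⟩ := hMS (a j) (mem_image_of_mem a (mem_univ j))
        exact ⟨(a j, y), hy, rfl⟩
    have himg2 : M.image Prod.snd = Finset.univ.image b := by
      ext y
      simp only [mem_image, mem_univ, true_and]
      constructor
      · rintro ⟨p, hp, rfl⟩
        have := (hMst p hp).2
        simpa using this
      · rintro ⟨i, rfl⟩
        obtain ⟨x, hx⟩ := hMT (b i) (mem_image_of_mem b (mem_univ i))
        exact ⟨(x, b i), hx, rfl⟩
    have hp1 : ∀ p ∈ M, p.1 < b0 := by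
      intro p hp
      obtain ⟨j, _, hj⟩ := Finset.mem_image.1 ((hMst p hp).1)
      rw [← hj]; exact haj j
    have hp2 : ∀ p ∈ M, b0 ≤ p.2 := by
      intro p hp
      obtain ⟨i, _, hi⟩ := Finset.mem_image.1 ((hMst p hp).2)
      rw [← hi]; exact hbi i
    have hcost : mmCost M = ∑ p ∈ M, (b0 - p.1) + ∑ p ∈ M, (p.2 - b0) := by
      rw [mmCost, ← Finset.sum_add_distrib]
      apply Finset.sum_congr rfl
      intro p hp
      have := hp1 p hp
      have := hp2 p hp
      rw [abs_of_nonpos (by linarith)]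
      ring
    have hA : ∑ j : Fin s, (b0 - a j) ≤ ∑ p ∈ M, (b0 - p.1) := by
      have e : ∑ j : Fin s, (b0 - a j) = ∑ x ∈ Finset.univ.image a, (b0 - x) :=
        (Finset.sum_image (fun x _ y _ h => ha.injective h)).symm
      rw [e, ← himg1]
      exact sum_image_le' M Prod.fst (fun x => b0 - x)
        (fun p hp => by linarith [hp1 p hp])
    have hB : ∑ i : Fin t, (b i - b0) ≤ ∑ p ∈ M, (p.2 - b0) := by
      have e : ∑ i : Fin t, (b i - b0) = ∑ y ∈ Finset.univ.image b, (y - b0) :=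
        (Finset.sum_image (f := fun y => y - b0) (g := b)
          (fun x _ y _ h => hb.injective h)).symm
      rw [e, ← himg2]
      exact sum_image_le' M Prod.snd (fun y => y - b0)
        (fun p hp => by linarith [hp2 p hp])
    rw [hcost]
    exact add_le_add hA hB
end

section
/- Let S = {a_1 < a_2 < … < a_s} and T = {b_1 < b_2 < … < b_t} be finite sets of reals with a_s < b_1 and t > s ≥ 1. Then the minimum of the cost over all MMs between S and T equals (t − s)·(b_1 − a_s) + ∑_{j=1}^{s} (b_1 − a_j) + ∑_{j=1}^{t} (b_j − b_1). -/
open Finset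

/-- Case 0 with `i > s`: for sorted sets `S = {a_1 < … < a_s}` and
`T = {b_1 < … < b_t}` entirely to the right of `S`, with `t > s ≥ 1`, the minimum
MM cost is `(t - s)·(b_1 - a_s) + ∑_{j=1}^s (b_1 - a_j) + ∑_{j=1}^t (b_j - b_1)`. -/
theorem stmt_7 (s t : ℕ) (hs : 0 < s) (hst : s < t)
    (a : Fin s → ℝ) (b : Fin t → ℝ) (ha : StrictMono a) (hb : StrictMono b)
    (hab : a ⟨s - 1, Nat.sub_lt hs one_pos⟩ < b ⟨0, Nat.lt_of_lt_of_le hs hst.le⟩) :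
    IsLeast {c : ℝ | ∃ M : Finset (ℝ × ℝ),
        IsMM (Finset.univ.image a) (Finset.univ.image b) M ∧ mmCost M = c}
      (((t : ℝ) - (s : ℝ)) *
          (b ⟨0, Nat.lt_of_lt_of_le hs hst.le⟩ - a ⟨s - 1, Nat.sub_lt hs one_pos⟩) +
        ∑ j : Fin s, (b ⟨0, Nat.lt_of_lt_of_le hs hst.le⟩ - a j) +
        ∑ j : Fin t, (b j - b ⟨0, Nat.lt_of_lt_of_le hs hst.le⟩)) := by
  classical
  set b0 : ℝ := b ⟨0, Nat.lt_of_lt_of_le hs hst.le⟩ with hb0def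
  set aS : ℝ := a ⟨s - 1, Nat.sub_lt hs one_pos⟩ with haSdef
  have hb0le : ∀ j : Fin t, b0 ≤ b j := fun j =>
    hb.monotone (by simp [Fin.le_def])
  have haleS : ∀ j : Fin s, a j ≤ aS := fun j =>
    ha.monotone (by simp [Fin.le_def]; omega)
  set S : Finset ℝ := Finset.univ.image a with hSdef
  set T : Finset ℝ := Finset.univ.image b with hTdef
  have hSle : ∀ x ∈ S, x ≤ aS := by
    intro x hx
    obtain ⟨j, _, rfl⟩ := Finset.mem_image.mp hx
    exact haleS j
  have hTge : ∀ y ∈ T, b0 ≤ y := by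
    intro y hy
    obtain ⟨j, _, rfl⟩ := Finset.mem_image.mp hy
    exact hb0le j
  have hcardT : T.card = t := by
    rw [hTdef, Finset.card_image_of_injective _ hb.injective, Finset.card_univ,
      Fintype.card_fin]
  have hmlt : ∀ i : ℕ, min i (s - 1) < s :=
    fun i => Nat.lt_of_le_of_lt (Nat.min_le_right _ _) (Nat.sub_lt hs one_pos)
  -- the candidate optimal matching
  set e : Fin t → ℝ × ℝ := fun j => (a ⟨min j.1 (s - 1), hmlt j.1⟩, b j) with hedef
  have heinj : Function.Injective e := by
    intro i j hij
    exact hb.injective (congrArg Prod.snd hij)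
  set M₀ : Finset (ℝ × ℝ) := Finset.univ.image e with hM₀def
  have hMM : IsMM S T M₀ := by
    refine ⟨?_, ?_, ?_⟩
    · intro p hp
      obtain ⟨j, _, rfl⟩ := Finset.mem_image.mp hp
      exact ⟨Finset.mem_image_of_mem a (Finset.mem_univ _),
        Finset.mem_image_of_mem b (Finset.mem_univ _)⟩
    · intro x hx
      obtain ⟨j, _, rfl⟩ := Finset.mem_image.mp hx
      refine ⟨b ⟨j.1, lt_trans j.isLt hst⟩, ?_⟩
      have : e ⟨j.1, lt_trans j.isLt hst⟩ = (a j, b ⟨j.1, lt_trans j.isLt hst⟩) := by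
        simp only [hedef]
        congr 1
        congr 1
        exact Fin.ext (by simp; omega)
      rw [← this]
      exact Finset.mem_image_of_mem e (Finset.mem_univ _)
    · intro y hy
      obtain ⟨j, _, rfl⟩ := Finset.mem_image.mp hy
      exact ⟨(e j).1, Finset.mem_image_of_mem e (Finset.mem_univ _)⟩
  -- cost of the candidate
  have habs : ∀ j : Fin t, |(e j).1 - (e j).2| = b j - a ⟨min j.1 (s - 1), hmlt j.1⟩ := by
    intro j
    have h1 : a ⟨min j.1 (s - 1), hmlt j.1⟩ ≤ b j :=
      le_trans (le_trans (haleS _) hab.le) (hb0le j)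
    simp only [hedef]
    rw [abs_of_nonpos (by linarith), neg_sub]
  set g : ℕ → ℝ := fun i => b0 - a ⟨min i (s - 1), hmlt i⟩ with hgdef
  have hsum1 : ∑ i ∈ Finset.range s, g i = ∑ j : Fin s, (b0 - a j) := by
    rw [← Fin.sum_univ_eq_sum_range]
    refine Finset.sum_congr rfl fun j _ => ?_
    simp only [hgdef]
    congr 2
    exact Fin.ext (by simp; omega)
  have hsum2 : ∑ i ∈ Finset.Ico s t, g i = ((t : ℝ) - s) * (b0 - aS) := by
    have : ∀ i ∈ Finset.Ico s t, g i = b0 - aS := by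
      intro i hi
      obtain ⟨h1, _⟩ := Finset.mem_Ico.mp hi
      simp only [hgdef, haSdef]
      congr 2
      exact Fin.ext (by simp; omega)
    rw [Finset.sum_congr rfl this, Finset.sum_const, Nat.card_Ico, nsmul_eq_mul,
      Nat.cast_sub hst.le]
  have hcost0 : mmCost M₀ = ((t : ℝ) - s) * (b0 - aS) + ∑ j : Fin s, (b0 - a j) +
      ∑ j : Fin t, (b j - b0) := by
    rw [mmCost, hM₀def, Finset.sum_image (fun i _ j _ h => heinj h)]
    have : ∀ j : Fin t, |(e j).1 - (e j).2| = (b j - b0) + g j.1 := by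
      intro j
      rw [habs j]
      simp only [hgdef]
      ring
    rw [Finset.sum_congr rfl (fun j _ => this j), Finset.sum_add_distrib]
    have : ∑ j : Fin t, g j.1 = ∑ i ∈ Finset.range t, g i :=
      Fin.sum_univ_eq_sum_range g t
    rw [this, ← Finset.sum_range_add_sum_Ico g hst.le, hsum1, hsum2]
    ring
  constructor
  · exact ⟨M₀, hMM, hcost0⟩
  · rintro c ⟨M, ⟨hmem, hS, hT⟩, rfl⟩
    -- choice functions
    set F : ℝ → ℝ × ℝ := fun x => if h : ∃ y, (x, y) ∈ M then (x, h.choose) else (x, 0)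
      with hFdef
    set G : ℝ → ℝ × ℝ := fun y => if h : ∃ x, (x, y) ∈ M then (h.choose, y) else (0, y)
      with hGdef
    have hF1 : ∀ x, (F x).1 = x := by
      intro x; simp only [hFdef]; split <;> rfl
    have hG2 : ∀ y, (G y).2 = y := by
      intro y; simp only [hGdef]; split <;> rfl
    have hFmem : ∀ x ∈ S, F x ∈ M := by
      intro x hx
      have h : ∃ y, (x, y) ∈ M := hS x hx
      simp only [hFdef, dif_pos h]
      exact h.choose_spec
    have hGmem : ∀ y ∈ T, G y ∈ M := by
      intro y hy
      have h : ∃ x, (x, y) ∈ M := hT y hy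
      simp only [hGdef, dif_pos h]
      exact h.choose_spec
    have hp1 : ∀ p ∈ M, p.1 ≤ aS := fun p hp => hSle _ (hmem p hp).1
    have hp2 : ∀ p ∈ M, b0 ≤ p.2 := fun p hp => hTge _ (hmem p hp).2
    -- claim A
    have hGsub : T.image G ⊆ M := by
      intro p hp
      obtain ⟨y, hy, rfl⟩ := Finset.mem_image.mp hp
      exact hGmem y hy
    have hA : ∑ j : Fin t, (b j - b0) ≤ ∑ p ∈ M, (p.2 - b0) := by
      have h1 : ∑ p ∈ T.image G, (p.2 - b0) = ∑ y ∈ T, (y - b0) := by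
        rw [Finset.sum_image (fun x _ y _ h => by
          rw [← hG2 x, ← hG2 y, h])]
        exact Finset.sum_congr rfl fun y _ => by rw [hG2]
      have h2 : ∑ y ∈ T, (y - b0) = ∑ j : Fin t, (b j - b0) := by
        rw [hTdef, Finset.sum_image (fun i _ j _ h => hb.injective h)]
      calc ∑ j : Fin t, (b j - b0) = ∑ p ∈ T.image G, (p.2 - b0) := by rw [h1, h2]
        _ ≤ ∑ p ∈ M, (p.2 - b0) :=
          Finset.sum_le_sum_of_subset_of_nonneg hGsub
            (fun p hp _ => sub_nonneg.mpr (hp2 p hp))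
    -- claim B
    have hFsub : S.image F ⊆ M := by
      intro p hp
      obtain ⟨x, hx, rfl⟩ := Finset.mem_image.mp hp
      exact hFmem x hx
    have hcardF : (S.image F).card = s := by
      rw [Finset.card_image_of_injOn (fun x _ y _ h => by rw [← hF1 x, ← hF1 y, h]),
        hSdef, Finset.card_image_of_injective _ ha.injective, Finset.card_univ,
        Fintype.card_fin]
    have hcardM : t ≤ M.card := by
      have : (T.image G).card = t := by
        rw [Finset.card_image_of_injOn (fun x _ y _ h => by rw [← hG2 x, ← hG2 y, h]),
          hcardT]
      rw [← this]
      exact Finset.card_le_card hGsub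
    have hB : ((t : ℝ) - s) * (b0 - aS) + ∑ j : Fin s, (b0 - a j) ≤
        ∑ p ∈ M, (b0 - p.1) := by
      have hsplit : ∑ p ∈ M \ S.image F, (b0 - p.1) + ∑ p ∈ S.image F, (b0 - p.1) =
          ∑ p ∈ M, (b0 - p.1) := Finset.sum_sdiff hFsub
      have h1 : ∑ p ∈ S.image F, (b0 - p.1) = ∑ j : Fin s, (b0 - a j) := by
        rw [Finset.sum_image (fun x _ y _ h => by rw [← hF1 x, ← hF1 y, h])]
        rw [hSdef, Finset.sum_image (fun i _ j _ h => ha.injective h)]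
        exact Finset.sum_congr rfl fun j _ => by rw [hF1]
      have hcardsd : t - s ≤ (M \ S.image F).card := by
        rw [Finset.card_sdiff_of_subset hFsub, hcardF]
        omega
      have h2 : ((t : ℝ) - s) * (b0 - aS) ≤ ∑ p ∈ M \ S.image F, (b0 - p.1) := by
        have hterm : ∀ p ∈ M \ S.image F, b0 - aS ≤ b0 - p.1 := by
          intro p hp
          have := hp1 p (Finset.mem_sdiff.mp hp).1
          linarith
        have := Finset.card_nsmul_le_sum (M \ S.image F) _ _ hterm
        rw [nsmul_eq_mul] at this
        have hge : ((t : ℝ) - s) ≤ ((M \ S.image F).card : ℝ) := by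
          have : ((t - s : ℕ) : ℝ) ≤ ((M \ S.image F).card : ℝ) :=
            Nat.cast_le.mpr hcardsd
          rwa [Nat.cast_sub hst.le] at this
        have hnn : (0 : ℝ) ≤ b0 - aS := by linarith
        nlinarith
      linarith
    -- combine
    have hcost : mmCost M = ∑ p ∈ M, (p.2 - b0) + ∑ p ∈ M, (b0 - p.1) := by
      rw [mmCost, ← Finset.sum_add_distrib]
      refine Finset.sum_congr rfl fun p hp => ?_
      have h1 := hp1 p hp
      have h2 := hp2 p hp
      rw [abs_of_nonpos (by linarith)]
      ring
    rw [hcost]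
    have hsumt : ∑ j : Fin t, (b j - b0) ≤ ∑ p ∈ M, (p.2 - b0) := hA
    linarith
end

section
/- Let M be a minimum-cost OMMD between S and T. Let a, c ∈ S and b, d ∈ T satisfy a ≤ b < c ≤ d. If the pair (a, d) belongs to M, then (a, b) belongs to M or (c, d) belongs to M (or both). -/
open Finset

/-- A many-to-many matching with demands (OMMD) between point sets `S` and `T`
on the real line with demand functions `α` (on `S`) and `β` (on `T`):
a set of pairs `(s, t)` with `s ∈ S`, `t ∈ T` such that every `s ∈ S` occurs in
at least `α s` pairs and every `t ∈ T` occurs in at least `β t` pairs. -/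
def IsOMMD (S T : Finset ℝ) (α β : ℝ → ℕ) (M : Finset (ℝ × ℝ)) : Prop :=
  (∀ p ∈ M, p.1 ∈ S ∧ p.2 ∈ T) ∧
  (∀ s ∈ S, α s ≤ (M.filter (fun p => p.1 = s)).card) ∧
  (∀ t ∈ T, β t ≤ (M.filter (fun p => p.2 = t)).card)

/-- A minimum-cost OMMD. -/
def IsMinOMMD (S T : Finset ℝ) (α β : ℝ → ℕ) (M : Finset (ℝ × ℝ)) : Prop :=
  IsOMMD S T α β M ∧ ∀ M' : Finset (ℝ × ℝ), IsOMMD S T α β M' → mmCost M ≤ mmCost M'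

/-- In a minimum-cost OMMD `M`, for `a, c ∈ S` and `b, d ∈ T` with `a ≤ b < c ≤ d`,
if `(a, d) ∈ M` then `(a, b) ∈ M` or `(c, d) ∈ M` (or both). -/
theorem stmt_8 (S T : Finset ℝ) (hdisj : Disjoint S T) (hS : S.Nonempty) (hT : T.Nonempty)
    (α β : ℝ → ℕ) (hα : ∀ s ∈ S, 1 ≤ α s) (hβ : ∀ t ∈ T, 1 ≤ β t)
    (M : Finset (ℝ × ℝ)) (hM : IsMinOMMD S T α β M)
    (a c : ℝ) (ha : a ∈ S) (hc : c ∈ S) (b d : ℝ) (hb : b ∈ T) (hd : d ∈ T)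
    (h1 : a ≤ b) (h2 : b < c) (h3 : c ≤ d)
    (had : (a, d) ∈ M) : (a, b) ∈ M ∨ (c, d) ∈ M := by
  by_contra hcon
  push_neg at hcon
  obtain ⟨hab, hcd⟩ := hcon
  obtain ⟨⟨hmem, hSdeg, hTdeg⟩, hmin⟩ := hM
  set M' : Finset (ℝ × ℝ) := insert (a, b) (insert (c, d) (M.erase (a, d))) with hM'
  have habM' : (a, b) ∉ insert (c, d) (M.erase (a, d)) := by
    simp only [Finset.mem_insert, Finset.mem_erase, Prod.mk.injEq, not_or]
    constructor
    · rintro ⟨h, _⟩; linarith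
    · rintro ⟨_, h⟩; exact hab h
  have hcdM' : (c, d) ∉ M.erase (a, d) := fun h => hcd (Finset.mem_of_mem_erase h)
  have hOMMD' : IsOMMD S T α β M' := by
    refine ⟨?_, ?_, ?_⟩
    · intro p hp
      rw [hM'] at hp
      simp only [Finset.mem_insert] at hp
      rcases hp with rfl | rfl | hp
      · exact ⟨ha, hb⟩
      · exact ⟨hc, hd⟩
      · exact hmem p (Finset.mem_of_mem_erase hp)
    · intro s hs
      refine le_trans (hSdeg s hs) ?_
      apply Finset.card_le_card_of_injOn (fun p => if p = (a, d) then (a, b) else p)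
      · intro p hp
        simp only [Finset.mem_coe, Finset.mem_filter] at hp ⊢
        by_cases hpe : p = (a, d)
        · subst hpe
          simp only [if_pos rfl]
          exact ⟨Finset.mem_insert_self _ _, hp.2⟩
        · simp only [if_neg hpe]
          exact ⟨Finset.mem_insert_of_mem (Finset.mem_insert_of_mem
            (Finset.mem_erase.mpr ⟨hpe, hp.1⟩)), hp.2⟩
      · intro p hp q hq hpq
        simp only [Finset.coe_filter, Set.mem_setOf_eq] at hp hq
        by_cases hpe : p = (a, d) <;> by_cases hqe : q = (a, d)
        · rw [hpe, hqe]
        · simp only [if_pos hpe, if_neg hqe] at hpq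
          exact absurd (hpq ▸ hq.1) hab
        · simp only [if_neg hpe, if_pos hqe] at hpq
          exact absurd (hpq ▸ hp.1) hab
        · simpa only [if_neg hpe, if_neg hqe] using hpq
    · intro t ht
      refine le_trans (hTdeg t ht) ?_
      apply Finset.card_le_card_of_injOn (fun p => if p = (a, d) then (c, d) else p)
      · intro p hp
        simp only [Finset.mem_coe, Finset.mem_filter] at hp ⊢
        by_cases hpe : p = (a, d)
        · subst hpe
          simp only [if_pos rfl]
          exact ⟨Finset.mem_insert_of_mem (Finset.mem_insert_self _ _), hp.2⟩
        · simp only [if_neg hpe]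
          exact ⟨Finset.mem_insert_of_mem (Finset.mem_insert_of_mem
            (Finset.mem_erase.mpr ⟨hpe, hp.1⟩)), hp.2⟩
      · intro p hp q hq hpq
        simp only [Finset.coe_filter, Set.mem_setOf_eq] at hp hq
        by_cases hpe : p = (a, d) <;> by_cases hqe : q = (a, d)
        · rw [hpe, hqe]
        · simp only [if_pos hpe, if_neg hqe] at hpq
          exact absurd (hpq ▸ hq.1) hcd
        · simp only [if_neg hpe, if_pos hqe] at hpq
          exact absurd (hpq ▸ hp.1) hcd
        · simpa only [if_neg hpe, if_neg hqe] using hpq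
  have hcost : mmCost M' < mmCost M := by
    have h5 := Finset.sum_erase_eq_sub (f := fun p : ℝ × ℝ => |p.1 - p.2|) had
    simp only [mmCost, hM']
    rw [Finset.sum_insert habM', Finset.sum_insert hcdM', h5]
    have e1 : |a - b| = b - a := by rw [abs_of_nonpos (by linarith)]; ring
    have e2 : |c - d| = d - c := by rw [abs_of_nonpos (by linarith)]; ring
    have e3 : |a - d| = d - a := by rw [abs_of_nonpos (by linarith)]; ring
    simp only at e1 e2 e3 ⊢
    rw [e1, e2, e3]
    linarith
  exact absurd (hmin M' hOMMD') (not_le.mpr hcost)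
end

section
/- Let M be an OMMD between S and T containing a pair (a, d) with a ∈ S and d ∈ T, and let b ∈ T and c ∈ S satisfy a ≤ b < c ≤ d with (a, b) ∉ M and (c, d) ∉ M. Then M' := (M \ {(a, d)}) ∪ {(a, b), (c, d)} is an OMMD between S and T whose cost is strictly smaller than the cost of M. -/
open Finset

/-- Replacing a long pair `(a, d)` of an OMMD by `(a, b)` and `(c, d)`
(with `a ≤ b < c ≤ d`, the latter two absent from `M`) yields an OMMD of
strictly smaller cost. -/
theorem stmt_9 (S T : Finset ℝ) (hdisj : Disjoint S T) (hS : S.Nonempty) (hT : T.Nonempty)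
    (α β : ℝ → ℕ) (hα : ∀ s ∈ S, 1 ≤ α s) (hβ : ∀ t ∈ T, 1 ≤ β t)
    (M : Finset (ℝ × ℝ)) (hM : IsOMMD S T α β M)
    (a c : ℝ) (ha : a ∈ S) (hc : c ∈ S) (b d : ℝ) (hb : b ∈ T) (hd : d ∈ T)
    (h1 : a ≤ b) (h2 : b < c) (h3 : c ≤ d)
    (had : (a, d) ∈ M) (hab : (a, b) ∉ M) (hcd : (c, d) ∉ M) :
    IsOMMD S T α β ((M \ {(a, d)}) ∪ {(a, b), (c, d)}) ∧
      mmCost ((M \ {(a, d)}) ∪ {(a, b), (c, d)}) < mmCost M := by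
  have hac : a < c := lt_of_le_of_lt h1 h2
  have hbd : b < d := lt_of_lt_of_le h2 h3
  have hsd : (M \ {(a, d)}) = M.erase (a, d) := by
    simp [Finset.sdiff_singleton_eq_erase]
  have hdisj2 : Disjoint (M \ {(a, d)}) ({(a, b), (c, d)} : Finset (ℝ × ℝ)) := by
    rw [Finset.disjoint_right]
    intro x hx
    rw [hsd]
    simp only [Finset.mem_insert, Finset.mem_singleton] at hx
    rcases hx with rfl | rfl
    · exact fun h => hab (Finset.mem_of_mem_erase h)
    · exact fun h => hcd (Finset.mem_of_mem_erase h)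
  constructor
  · refine ⟨?_, ?_, ?_⟩
    · intro p hp
      rw [Finset.mem_union] at hp
      rcases hp with hp | hp
      · exact hM.1 p (Finset.mem_sdiff.mp hp).1
      · simp only [Finset.mem_insert, Finset.mem_singleton] at hp
        rcases hp with rfl | rfl
        · exact ⟨ha, hb⟩
        · exact ⟨hc, hd⟩
    · intro s hs
      rw [Finset.filter_union, Finset.card_union_of_disjoint
        (Finset.disjoint_filter_filter hdisj2), hsd, Finset.filter_erase]
      by_cases hsa : s = a
      · subst hsa
        have hmem : (s, d) ∈ M.filter (fun p => p.1 = s) := by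
          simp [had]
        have hfpair : ({(s, b), (c, d)} : Finset (ℝ × ℝ)).filter (fun p => p.1 = s)
            = {(s, b)} := by
          ext p
          simp only [Finset.mem_filter, Finset.mem_insert, Finset.mem_singleton]
          constructor
          · rintro ⟨rfl | rfl, h⟩
            · rfl
            · exact absurd h hac.ne'
          · rintro rfl; exact ⟨Or.inl rfl, rfl⟩
        rw [hfpair, Finset.card_singleton,
          Finset.card_erase_of_mem hmem]
        have := hM.2.1 s hs
        have hpos : 0 < (M.filter (fun p => p.1 = s)).card := Finset.card_pos.mpr ⟨_, hmem⟩
        omega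
      · have heq : (M.filter (fun p => p.1 = s)).erase (a, d)
            = M.filter (fun p => p.1 = s) := by
          apply Finset.erase_eq_of_notMem
          simp only [Finset.mem_filter, not_and]
          exact fun _ h => hsa h.symm
        rw [heq]
        have := hM.2.1 s hs
        omega
    · intro t ht
      rw [Finset.filter_union, Finset.card_union_of_disjoint
        (Finset.disjoint_filter_filter hdisj2), hsd, Finset.filter_erase]
      by_cases htd : t = d
      · subst htd
        have hmem : (a, t) ∈ M.filter (fun p => p.2 = t) := by
          simp [had]
        have hfpair : ({(a, b), (c, t)} : Finset (ℝ × ℝ)).filter (fun p => p.2 = t)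
            = {(c, t)} := by
          ext p
          simp only [Finset.mem_filter, Finset.mem_insert, Finset.mem_singleton]
          constructor
          · rintro ⟨rfl | rfl, h⟩
            · exact absurd h hbd.ne
            · rfl
          · rintro rfl; exact ⟨Or.inr rfl, rfl⟩
        rw [hfpair, Finset.card_singleton, Finset.card_erase_of_mem hmem]
        have := hM.2.2 t ht
        have hpos : 0 < (M.filter (fun p => p.2 = t)).card := Finset.card_pos.mpr ⟨_, hmem⟩
        omega
      · have heq : (M.filter (fun p => p.2 = t)).erase (a, d)
            = M.filter (fun p => p.2 = t) := by
          apply Finset.erase_eq_of_notMem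
          simp only [Finset.mem_filter, not_and]
          exact fun _ h => htd h.symm
        rw [heq]
        have := hM.2.2 t ht
        omega
  · have hne : ((a, b) : ℝ × ℝ) ≠ (c, d) := by
      simp [hac.ne]
    rw [mmCost, Finset.sum_union hdisj2, hsd, Finset.sum_pair hne]
    have herase : ∑ p ∈ M.erase (a, d), |p.1 - p.2|
        = (∑ p ∈ M, |p.1 - p.2|) - |a - d| := by
      rw [eq_sub_iff_add_eq]
      exact Finset.sum_erase_add M _ had
    rw [herase, mmCost]
    have e1 : |a - b| = b - a := by rw [abs_sub_comm]; exact abs_of_nonneg (by linarith)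
    have e2 : |c - d| = d - c := by rw [abs_sub_comm]; exact abs_of_nonneg (by linarith)
    have e3 : |a - d| = d - a := by rw [abs_sub_comm]; exact abs_of_nonneg (by linarith)
    rw [e1, e2, e3]
    linarith
end

section
/- Let M be a minimum-cost OMMD between S and T. Let b, c ∈ S and a, d ∈ T satisfy a ≤ b < c ≤ d. If M contains both pairs (c, a) and (b, d), then M also contains (b, a) or (c, d) (or both). -/
open Finset

lemma swap_card_aux (M : Finset (ℝ × ℝ)) (P : ℝ × ℝ → Prop) [DecidablePred P]
    (p q r w : ℝ × ℝ) (hp : p ∈ M) (hq : q ∈ M) (hr : r ∉ M) (hw : w ∉ M)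
    (hpq : p ≠ q) (hrw : r ≠ w)
    (h1 : P r ↔ P p) (h2 : P w ↔ P q) :
    ((insert r (insert w ((M.erase p).erase q))).filter P).card = (M.filter P).card := by
  have hqp : q ∈ M.erase p := Finset.mem_erase.mpr ⟨hpq.symm, hq⟩
  have hrE : r ∉ (M.erase p).erase q := fun h => hr (Finset.mem_of_mem_erase (Finset.mem_of_mem_erase h))
  have hwE : w ∉ (M.erase p).erase q := fun h => hw (Finset.mem_of_mem_erase (Finset.mem_of_mem_erase h))
  set F := M.filter P with hF
  have hfe : ((M.erase p).erase q).filter P = (F.erase p).erase q := by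
    rw [Finset.filter_erase, Finset.filter_erase]
  rw [Finset.filter_insert, Finset.filter_insert, hfe]
  by_cases hPr : P r
  · have hPp : P p := h1.mp hPr
    have hpF : p ∈ F := Finset.mem_filter.mpr ⟨hp, hPp⟩
    by_cases hPw : P w
    · have hPq : P q := h2.mp hPw
      have hqF : q ∈ F.erase p := Finset.mem_erase.mpr ⟨hpq.symm, Finset.mem_filter.mpr ⟨hq, hPq⟩⟩
      simp only [if_pos hPr, if_pos hPw]
      have hwF : w ∉ (F.erase p).erase q := fun h => hwE (by
        have := Finset.mem_of_mem_erase (Finset.mem_of_mem_erase h)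
        exact absurd (Finset.mem_filter.mp this).1 hw)
      have hrF : r ∉ insert w ((F.erase p).erase q) := by
        simp only [Finset.mem_insert]
        rintro (h | h)
        · exact hrw h
        · exact hr (Finset.mem_filter.mp (Finset.mem_of_mem_erase (Finset.mem_of_mem_erase h))).1
      rw [Finset.card_insert_of_notMem hrF, Finset.card_insert_of_notMem hwF,
        Finset.card_erase_of_mem hqF, Finset.card_erase_of_mem hpF]
      have h2le : 2 ≤ F.card := Finset.one_lt_card.mpr ⟨p, hpF, q, Finset.mem_of_mem_erase hqF, hpq⟩
      omega
    · have hPq : ¬ P q := fun h => hPw (h2.mpr h)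
      have hqF : q ∉ F.erase p := fun h =>
        hPq (Finset.mem_filter.mp (Finset.mem_of_mem_erase h)).2
      simp only [if_pos hPr, if_neg hPw]
      rw [Finset.erase_eq_of_notMem hqF]
      have hrF : r ∉ F.erase p := fun h =>
        hr (Finset.mem_filter.mp (Finset.mem_of_mem_erase h)).1
      rw [Finset.card_insert_of_notMem hrF, Finset.card_erase_of_mem hpF]
      have : 1 ≤ F.card := Finset.card_pos.mpr ⟨p, hpF⟩
      omega
  · have hPp : ¬ P p := fun h => hPr (h1.mpr h)
    have hpF : p ∉ F := fun h => hPp (Finset.mem_filter.mp h).2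
    rw [Finset.erase_eq_of_notMem hpF] at *
    by_cases hPw : P w
    · have hPq : P q := h2.mp hPw
      have hqF : q ∈ F := Finset.mem_filter.mpr ⟨hq, hPq⟩
      simp only [if_neg hPr, if_pos hPw]
      have hwF : w ∉ F.erase q := fun h =>
        hw (Finset.mem_filter.mp (Finset.mem_of_mem_erase h)).1
      rw [Finset.card_insert_of_notMem hwF, Finset.card_erase_of_mem hqF]
      have : 1 ≤ F.card := Finset.card_pos.mpr ⟨q, hqF⟩
      omega
    · have hPq : ¬ P q := fun h => hPw (h2.mpr h)
      have hqF : q ∉ F := fun h => hPq (Finset.mem_filter.mp h).2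
      simp only [if_neg hPr, if_neg hPw]
      rw [Finset.erase_eq_of_notMem hqF]

/-- In a minimum-cost OMMD `M`, for `b, c ∈ S` and `a, d ∈ T` with `a ≤ b < c ≤ d`,
if both `(c, a)` and `(b, d)` belong to `M` then `(b, a) ∈ M` or `(c, d) ∈ M`
(or both). -/
theorem stmt_10 (S T : Finset ℝ) (hdisj : Disjoint S T) (hS : S.Nonempty) (hT : T.Nonempty)
    (α β : ℝ → ℕ) (hα : ∀ s ∈ S, 1 ≤ α s) (hβ : ∀ t ∈ T, 1 ≤ β t)
    (M : Finset (ℝ × ℝ)) (hM : IsMinOMMD S T α β M)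
    (b c : ℝ) (hb : b ∈ S) (hc : c ∈ S) (a d : ℝ) (ha : a ∈ T) (hd : d ∈ T)
    (h1 : a ≤ b) (h2 : b < c) (h3 : c ≤ d)
    (hca : (c, a) ∈ M) (hbd : (b, d) ∈ M) : (b, a) ∈ M ∨ (c, d) ∈ M := by
  by_contra hcon
  push_neg at hcon
  obtain ⟨hba, hcd⟩ := hcon
  obtain ⟨⟨hMem, hSdeg, hTdeg⟩, hmin⟩ := hM
  have hbc : b ≠ c := ne_of_lt h2
  have hpq : ((b, d) : ℝ × ℝ) ≠ (c, a) := fun h => hbc (congrArg Prod.fst h)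
  have hrw : ((b, a) : ℝ × ℝ) ≠ (c, d) := fun h => hbc (congrArg Prod.fst h)
  set E : Finset (ℝ × ℝ) := (M.erase (b, d)).erase (c, a) with hE
  set M' : Finset (ℝ × ℝ) := insert (b, a) (insert (c, d) E) with hM'
  have hcaE : (c, a) ∈ M.erase (b, d) := Finset.mem_erase.mpr ⟨hpq.symm, hca⟩
  have hmemE : ∀ p ∈ E, p ∈ M := fun p hp =>
    Finset.mem_of_mem_erase (Finset.mem_of_mem_erase hp)
  have hbaE : (b, a) ∉ insert (c, d) E := by
    simp only [Finset.mem_insert]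
    rintro (h | h)
    · exact hrw h
    · exact hba (hmemE _ h)
  have hcdE : (c, d) ∉ E := fun h => hcd (hmemE _ h)
  -- M' is an OMMD
  have hOMMD' : IsOMMD S T α β M' := by
    refine ⟨?_, ?_, ?_⟩
    · intro p hp
      rw [hM'] at hp
      simp only [Finset.mem_insert] at hp
      rcases hp with h | h | h
      · rw [h]; exact ⟨hb, ha⟩
      · rw [h]; exact ⟨hc, hd⟩
      · exact hMem p (hmemE p h)
    · intro s hs
      have := swap_card_aux M (fun p => p.1 = s) (b, d) (c, a) (b, a) (c, d)
        hbd hca hba hcd hpq hrw Iff.rfl Iff.rfl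
      rw [hM', hE]
      rw [this]
      exact hSdeg s hs
    · intro t ht
      have key := swap_card_aux M (fun p => p.2 = t) (c, a) (b, d) (b, a) (c, d)
        hca hbd hba hcd hpq.symm hrw Iff.rfl Iff.rfl
      rw [hM', hE, Finset.erase_right_comm]
      rw [key]
      exact hTdeg t ht
  have hle := hmin M' hOMMD'
  -- cost computation
  have hcostM : mmCost M = |b - d| + (|c - a| + ∑ p ∈ E, |p.1 - p.2|) := by
    rw [mmCost, ← Finset.add_sum_erase M _ hbd, ← Finset.add_sum_erase _ _ hcaE]
  have hcostM' : mmCost M' = |b - a| + (|c - d| + ∑ p ∈ E, |p.1 - p.2|) := by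
    rw [mmCost, hM', Finset.sum_insert hbaE, Finset.sum_insert hcdE]
  rw [hcostM, hcostM'] at hle
  rw [abs_of_nonneg (by linarith : (0:ℝ) ≤ b - a), abs_of_nonpos (by linarith : c - d ≤ (0:ℝ)),
    abs_of_nonpos (by linarith : b - d ≤ (0:ℝ)), abs_of_nonneg (by linarith : (0:ℝ) ≤ c - a)] at hle
  linarith
end

section
/- Let M be an OMMD between S and T, let b, c ∈ S and a, d ∈ T satisfy a ≤ b < c ≤ d, and suppose M contains both pairs (c, a) and (b, d) but contains neither (b, a) nor (c, d). Then M' := (M \ {(c, a), (b, d)}) ∪ {(b, a), (c, d)} is an OMMD between S and T whose cost is strictly smaller than the cost of M. -/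
open Finset

private lemma swap_filter_card (M P Q : Finset (ℝ × ℝ)) (g : ℝ × ℝ → Prop) [DecidablePred g]
    (hPsub : P ⊆ M) (hdisjQ : Disjoint (M \ P) Q)
    (hcards : (P.filter g).card = (Q.filter g).card) :
    (((M \ P) ∪ Q).filter g).card = (M.filter g).card := by
  rw [Finset.filter_union,
    Finset.card_union_of_disjoint (Finset.disjoint_filter_filter hdisjQ)]
  have h1 : (M \ P).filter g = M.filter g \ P.filter g := by
    ext p; simp only [Finset.mem_filter, Finset.mem_sdiff]; tauto
  rw [h1, Finset.card_sdiff_of_subset (Finset.filter_subset_filter g hPsub), ← hcards]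
  have h2 := Finset.card_le_card (Finset.filter_subset_filter g hPsub)
  have h3 := Finset.card_le_card (Finset.filter_subset g P)
  omega

/-- Uncrossing in an OMMD: swapping the crossing pairs `(c, a)` and `(b, d)` for
`(b, a)` and `(c, d)` (when the latter are absent) yields an OMMD of strictly
smaller cost. -/
theorem stmt_11 (S T : Finset ℝ) (hdisj : Disjoint S T) (hS : S.Nonempty) (hT : T.Nonempty)
    (α β : ℝ → ℕ) (hα : ∀ s ∈ S, 1 ≤ α s) (hβ : ∀ t ∈ T, 1 ≤ β t)
    (M : Finset (ℝ × ℝ)) (hM : IsOMMD S T α β M)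
    (b c : ℝ) (hb : b ∈ S) (hc : c ∈ S) (a d : ℝ) (ha : a ∈ T) (hd : d ∈ T)
    (h1 : a ≤ b) (h2 : b < c) (h3 : c ≤ d)
    (hca : (c, a) ∈ M) (hbd : (b, d) ∈ M)
    (hba : (b, a) ∉ M) (hcd : (c, d) ∉ M) :
    IsOMMD S T α β ((M \ {(c, a), (b, d)}) ∪ {(b, a), (c, d)}) ∧
      mmCost ((M \ {(c, a), (b, d)}) ∪ {(b, a), (c, d)}) < mmCost M := by
  obtain ⟨hmem, hαc, hβc⟩ := hM
  have hbc : b ≠ c := ne_of_lt h2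
  have had : a ≠ d := ne_of_lt (h1.trans_lt (h2.trans_le h3))
  have hne1 : ((c, a) : ℝ × ℝ) ≠ (b, d) := by simp [hbc.symm]
  have hne2 : ((b, a) : ℝ × ℝ) ≠ (c, d) := by simp [hbc]
  set P : Finset (ℝ × ℝ) := {(c, a), (b, d)} with hP
  set Q : Finset (ℝ × ℝ) := {(b, a), (c, d)} with hQ
  have hPsub : P ⊆ M := by
    intro p hp
    simp only [hP, mem_insert, mem_singleton] at hp
    rcases hp with h | h <;> subst h <;> assumption
  have hdisjQ : Disjoint (M \ P) Q := by
    rw [Finset.disjoint_right]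
    intro p hp
    simp only [hQ, mem_insert, mem_singleton] at hp
    rcases hp with h | h <;> subst h <;> simp [hba, hcd]
  refine ⟨⟨?_, ?_, ?_⟩, ?_⟩
  · intro p hp
    rw [mem_union] at hp
    rcases hp with hp | hp
    · exact hmem p (mem_sdiff.mp hp).1
    · simp only [hQ, mem_insert, mem_singleton] at hp
      rcases hp with h | h <;> subst h
      · exact ⟨hb, ha⟩
      · exact ⟨hc, hd⟩
  · intro s hs
    rw [swap_filter_card M P Q _ hPsub hdisjQ ?_]
    · exact hαc s hs
    · by_cases hcs : c = s <;> by_cases hbs : b = s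
      · exact absurd (hbs.trans hcs.symm) hbc
      · simp [hP, hQ, Finset.filter_insert, Finset.filter_singleton, hcs, hbs]
      · simp [hP, hQ, Finset.filter_insert, Finset.filter_singleton, hcs, hbs]
      · simp [hP, hQ, Finset.filter_insert, Finset.filter_singleton, hcs, hbs]
  · intro t ht
    rw [swap_filter_card M P Q _ hPsub hdisjQ ?_]
    · exact hβc t ht
    · by_cases hat : a = t <;> by_cases hdt : d = t
      · exact absurd (hat.trans hdt.symm) had
      · simp [hP, hQ, Finset.filter_insert, Finset.filter_singleton, hat, hdt]
      · simp [hP, hQ, Finset.filter_insert, Finset.filter_singleton, hat, hdt]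
      · simp [hP, hQ, Finset.filter_insert, Finset.filter_singleton, hat, hdt]
  · unfold mmCost
    rw [Finset.sum_union hdisjQ]
    have hsd : ∑ p ∈ M \ P, |p.1 - p.2| = (∑ p ∈ M, |p.1 - p.2|) - ∑ p ∈ P, |p.1 - p.2| := by
      have := Finset.sum_sdiff (f := fun p : ℝ × ℝ => |p.1 - p.2|) hPsub
      linarith
    have hsP : ∑ p ∈ P, |p.1 - p.2| = |c - a| + |b - d| := by
      rw [hP, Finset.sum_pair hne1]
    have hsQ : ∑ p ∈ Q, |p.1 - p.2| = |b - a| + |c - d| := by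
      rw [hQ, Finset.sum_pair hne2]
    rw [hsd, hsP, hsQ, abs_of_nonneg (by linarith : (0:ℝ) ≤ c - a),
      abs_of_nonpos (by linarith : (b:ℝ) - d ≤ 0),
      abs_of_nonneg (by linarith : (0:ℝ) ≤ b - a),
      abs_of_nonpos (by linarith : (c:ℝ) - d ≤ 0)]
    linarith
end
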